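/- Let X₁, …, X_{k} be i.i.d. real-valued random variables (almost surely nonzero) and define Z = (∏_{i=1}^{k} sign(X_i)) · min_{1≤i≤k} |X_i|. Then E[e^{−Z/2}] ≤ k · E[e^{−X₁/2}]. -/

import Mathlib

open MeasureTheory ProbabilityTheory Real

lemma real_measurable_sign : Measurable Real.sign := by
  unfold Real.sign
  exact Measurable.ite (measurableSet_lt measurable_id measurable_const)
    measurable_const
    (Measurable.ite (measurableSet_lt measurable_const measurable_id)
      measurable_const measurable_const)

lemma pointwise_key {k : ℕ} (hk : 0 < k) (x : Fin k → ℝ) :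
    Real.exp (-((∏ i, Real.sign (x i)) * ⨅ i, |x i|) / 2)
      ≤ ∑ i, Real.exp (-x i / 2) := by
  haveI : Nonempty (Fin k) := ⟨⟨0, hk⟩⟩
  have hbdd : BddBelow (Set.range fun i => |x i|) := (Set.finite_range _).bddBelow
  obtain ⟨i₀, hi₀⟩ := Finite.exists_min fun i => |x i|
  have hm : (⨅ i, |x i|) = |x i₀| :=
    le_antisymm (ciInf_le hbdd i₀) (le_ciInf hi₀)
  have hmle : ∀ i, (⨅ i, |x i|) ≤ |x i| := fun i => ciInf_le hbdd i
  have hmnn : 0 ≤ ⨅ i, |x i| := hm ▸ abs_nonneg _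
  have hprod : (∏ i, Real.sign (x i)) = -1 ∨ (∏ i, Real.sign (x i)) = 0 ∨
      (∏ i, Real.sign (x i)) = 1 := by
    refine Finset.prod_induction _ (fun y => y = -1 ∨ y = 0 ∨ y = 1) ?_ (by norm_num)
      (fun i _ => Real.sign_apply_eq (x i))
    rintro a b (rfl|rfl|rfl) (rfl|rfl|rfl) <;> norm_num
  have key : ∃ j, x j ≤ (∏ i, Real.sign (x i)) * ⨅ i, |x i| := by
    rcases hprod with h | h | h
    · -- some x j < 0
      have : ∃ j, x j < 0 := by
        by_contra hc
        push_neg at hc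
        have : 0 ≤ ∏ i, Real.sign (x i) := by
          refine Finset.prod_nonneg fun i _ => ?_
          rcases (hc i).eq_or_lt with h | h
          · simp [← h]
          · simp [Real.sign_of_pos h]
        rw [h] at this; linarith
      obtain ⟨j, hj⟩ := this
      refine ⟨j, ?_⟩
      rw [h, neg_one_mul]
      have := hmle j
      rw [abs_of_neg hj] at this
      linarith
    · -- some x j = 0
      obtain ⟨j, -, hj⟩ := Finset.prod_eq_zero_iff.mp h
      refine ⟨j, ?_⟩
      rw [h, zero_mul, Real.sign_eq_zero_iff.mp hj]
    · refine ⟨i₀, ?_⟩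
      rw [h, one_mul, hm]
      exact le_abs_self _
  obtain ⟨j, hj⟩ := key
  calc Real.exp (-((∏ i, Real.sign (x i)) * ⨅ i, |x i|) / 2)
      ≤ Real.exp (-x j / 2) := by
        apply Real.exp_le_exp.mpr; linarith
    _ ≤ ∑ i, Real.exp (-x i / 2) :=
        Finset.single_le_sum (f := fun i => Real.exp (-x i / 2)) (fun i _ => (Real.exp_pos _).le) (Finset.mem_univ j)

/-- For `k` i.i.d. inputs, the min-sum check node output
`Z = (∏ sign(X_i)) · min_i |X_i|` satisfies `E[exp(-Z/2)] ≤ k · E[exp(-X₁/2)]`. -/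
theorem bhattacharyya_minsum_k_inputs
    {Ω : Type*} [MeasureSpace Ω] [IsProbabilityMeasure (ℙ : Measure Ω)]
    (k : ℕ) (hk : 0 < k) (X : Fin k → Ω → ℝ)
    (hmeas : ∀ i, Measurable (X i))
    (hindep : iIndepFun X ℙ)
    (hident : ∀ i, IdentDistrib (X i) (X ⟨0, hk⟩) ℙ ℙ)
    (hne : ∀ i, ∀ᵐ ω ∂ℙ, X i ω ≠ 0)
    (hint : Integrable (fun ω => Real.exp (-X ⟨0, hk⟩ ω / 2)) ℙ) :
    (∫ ω, Real.exp (-((∏ i, Real.sign (X i ω)) * ⨅ i, |X i ω|) / 2))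
      ≤ k * ∫ ω, Real.exp (-X ⟨0, hk⟩ ω / 2) := by
  haveI : Nonempty (Fin k) := ⟨⟨0, hk⟩⟩
  have hg : Measurable fun t : ℝ => Real.exp (-t / 2) := Real.measurable_exp.comp (measurable_id.neg.div_const 2)
  have hinti : ∀ i, Integrable (fun ω => Real.exp (-X i ω / 2)) ℙ := fun i =>
    (((hident i).comp hg).integrable_iff).mpr hint
  have hinteq : ∀ i, ∫ ω, Real.exp (-X i ω / 2) ∂ℙ = ∫ ω, Real.exp (-X ⟨0, hk⟩ ω / 2) ∂ℙ :=
    fun i => ((hident i).comp hg).integral_eq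
  have hZmeas : Measurable fun ω =>
      Real.exp (-((∏ i, Real.sign (X i ω)) * ⨅ i, |X i ω|) / 2) := by
    apply hg.comp
    exact (Finset.measurable_prod _ fun i _ => real_measurable_sign.comp (hmeas i)).mul
      (Measurable.iInf fun i => (hmeas i).abs)
  have hsum_int : Integrable (fun ω => ∑ i, Real.exp (-X i ω / 2)) ℙ :=
    integrable_finset_sum _ fun i _ => hinti i
  have hZint : Integrable (fun ω =>
      Real.exp (-((∏ i, Real.sign (X i ω)) * ⨅ i, |X i ω|) / 2)) ℙ := by
    refine hsum_int.mono' hZmeas.aestronglyMeasurable ?_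
    filter_upwards with ω
    rw [Real.norm_eq_abs, abs_of_pos (Real.exp_pos _)]
    exact pointwise_key hk (fun i => X i ω)
  calc (∫ ω, Real.exp (-((∏ i, Real.sign (X i ω)) * ⨅ i, |X i ω|) / 2))
      ≤ ∫ ω, ∑ i, Real.exp (-X i ω / 2) ∂ℙ := by
        refine integral_mono hZint hsum_int ?_
        exact fun ω => pointwise_key hk (fun i => X i ω)
    _ = ∑ i, ∫ ω, Real.exp (-X i ω / 2) ∂ℙ := integral_finset_sum _ fun i _ => hinti i
    _ = k * ∫ ω, Real.exp (-X ⟨0, hk⟩ ω / 2) := by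
        simp [hinteq, Finset.sum_const, nsmul_eq_mul]
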